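/- For any three powers 0 < A < B < C, the thresholds are ordered as g₀*(A, B) > g₀*(A, C) > g₀*(B, C). -/
import Mathlib


/-- The decisional threshold between two power decisions. -/
noncomputable def g0 (c σ2 Pi Pj : ℝ) : ℝ :=
  c * σ2 * (1 / Pi - 1 / Pj) / (Real.log Pj - Real.log Pi)

lemma lm_hasDeriv (a x : ℝ) (ha : 0 < a) (hx : 0 < x) (hxa : x ≠ a) :
    HasDerivAt (fun y => (y - a) / (Real.log y - Real.log a))
      ((1 * (Real.log x - Real.log a) - (x - a) * (1 / x)) / (Real.log x - Real.log a) ^ 2) x := by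
  have hlog : Real.log x ≠ Real.log a := fun h =>
    hxa (Real.log_injOn_pos (Set.mem_Ioi.mpr hx) (Set.mem_Ioi.mpr ha) h)
  have h1 : HasDerivAt (fun y : ℝ => y - a) 1 x := (hasDerivAt_id x).sub_const a
  have h2 : HasDerivAt (fun y => Real.log y - Real.log a) (1 / x) x := by
    simpa using (Real.hasDerivAt_log hx.ne').sub_const (Real.log a)
  exact h1.div h2 (sub_ne_zero.mpr hlog)

lemma lm_deriv_pos (a x : ℝ) (ha : 0 < a) (hx : 0 < x) (hxa : x ≠ a) :
    0 < (1 * (Real.log x - Real.log a) - (x - a) * (1 / x)) / (Real.log x - Real.log a) ^ 2 := by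
  have hlog : Real.log x ≠ Real.log a := fun h =>
    hxa (Real.log_injOn_pos (Set.mem_Ioi.mpr hx) (Set.mem_Ioi.mpr ha) h)
  have hden : 0 < (Real.log x - Real.log a) ^ 2 := by
    have := sub_ne_zero.mpr hlog
    positivity
  have hratio : (0:ℝ) < a / x := div_pos ha hx
  have hne : a / x ≠ 1 := by
    intro h
    apply hxa
    field_simp at h
    linarith
  have key := Real.log_lt_sub_one_of_pos hratio hne
  rw [Real.log_div ha.ne' hx.ne'] at key
  have hxa' : (x - a) * (1 / x) = 1 - a / x := by field_simp
  have hnum : 0 < 1 * (Real.log x - Real.log a) - (x - a) * (1 / x) := by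
    rw [hxa']; linarith
  exact div_pos hnum hden

lemma lm_mono_Ioi (a : ℝ) (ha : 0 < a) :
    StrictMonoOn (fun y => (y - a) / (Real.log y - Real.log a)) (Set.Ioi a) := by
  apply strictMonoOn_of_deriv_pos (convex_Ioi a)
  · exact fun x hx =>
      ((lm_hasDeriv a x ha (ha.trans hx) (ne_of_gt hx)).continuousAt).continuousWithinAt
  · intro x hx
    rw [interior_Ioi] at hx
    rw [(lm_hasDeriv a x ha (ha.trans hx) (ne_of_gt hx)).deriv]
    exact lm_deriv_pos a x ha (ha.trans hx) (ne_of_gt hx)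

lemma lm_mono_Ioo (a : ℝ) (ha : 0 < a) :
    StrictMonoOn (fun y => (y - a) / (Real.log y - Real.log a)) (Set.Ioo 0 a) := by
  apply strictMonoOn_of_deriv_pos (convex_Ioo 0 a)
  · exact fun x hx =>
      ((lm_hasDeriv a x ha hx.1 (ne_of_lt hx.2)).continuousAt).continuousWithinAt
  · intro x hx
    rw [interior_Ioo] at hx
    rw [(lm_hasDeriv a x ha hx.1 (ne_of_lt hx.2)).deriv]
    exact lm_deriv_pos a x ha hx.1 (ne_of_lt hx.2)

/-- For any three powers `0 < A < B < C`, the thresholds are ordered as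
`g₀*(A, B) > g₀*(A, C) > g₀*(B, C)`. -/
theorem threshold_ordering (c σ2 A B C : ℝ) (hc : 0 < c) (hσ2 : 0 < σ2)
    (hA : 0 < A) (hAB : A < B) (hBC : B < C) :
    g0 c σ2 A B > g0 c σ2 A C ∧ g0 c σ2 A C > g0 c σ2 B C := by
  have hB : 0 < B := hA.trans hAB
  have hC : 0 < C := hB.trans hBC
  have hcs : 0 < c * σ2 := mul_pos hc hσ2
  -- g0 c σ2 P Q = c*σ2 * f_a (1/Q) with a = 1/P, and also = c*σ2 * f_a (1/P) with a = 1/Q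
  have key : ∀ P Q : ℝ, 0 < P → 0 < Q →
      g0 c σ2 P Q = c * σ2 * ((1/Q - 1/P) / (Real.log (1/Q) - Real.log (1/P))) := by
    intro P Q hP hQ
    rw [g0]
    simp only [one_div, Real.log_inv]
    rw [mul_div_assoc]
    congr 1
    rw [show -Real.log Q - -Real.log P = -(Real.log Q - Real.log P) by ring,
      show (Q⁻¹ - P⁻¹ : ℝ) = -(P⁻¹ - Q⁻¹) by ring, neg_div_neg_eq]
  have key2 : ∀ P Q : ℝ, 0 < P → 0 < Q →
      g0 c σ2 P Q = c * σ2 * ((1/P - 1/Q) / (Real.log (1/P) - Real.log (1/Q))) := by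
    intro P Q hP hQ
    rw [key P Q hP hQ,
      show (1/Q - 1/P : ℝ) = -(1/P - 1/Q) by ring,
      show Real.log (1/Q) - Real.log (1/P) = -(Real.log (1/P) - Real.log (1/Q)) by ring,
      neg_div_neg_eq]
  have huv : (1:ℝ)/B < 1/A := one_div_lt_one_div_of_lt hA hAB
  have hvw : (1:ℝ)/C < 1/B := one_div_lt_one_div_of_lt hB hBC
  have hu : (0:ℝ) < 1/A := by positivity
  have hv : (0:ℝ) < 1/B := by positivity
  have hw : (0:ℝ) < 1/C := by positivity
  constructor
  · -- fix a = 1/A, compare at 1/C < 1/B in Ioo 0 (1/A)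
    rw [key A B hA hB, key A C hA hC]
    have := lm_mono_Ioo (1/A) hu (Set.mem_Ioo.mpr ⟨hw, hvw.trans huv⟩)
      (Set.mem_Ioo.mpr ⟨hv, huv⟩) hvw
    exact mul_lt_mul_of_pos_left this hcs
  · -- fix a = 1/C, compare at 1/B < 1/A in Ioi (1/C)
    rw [key2 A C hA hC, key2 B C hB hC]
    have := lm_mono_Ioi (1/C) hw (Set.mem_Ioi.mpr hvw)
      (Set.mem_Ioi.mpr (hvw.trans huv)) huv
    exact mul_lt_mul_of_pos_left this hcs
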